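/- Let P(t) = (∑_{i=0}^{n} ω_i p_i B_i^n(t)) / (∑_{i=0}^{n} ω_i B_i^n(t)) be a rational Bézier curve of degree n ≥ 2 with control points p_0, …, p_n ∈ ℝ^d and strictly positive weights ω_0, …, ω_n with ω_0 = ω_n = 1, and let Q(t) = ∑_{i=0}^{m} q_i B_i^m(t) be a Bézier curve of degree m ≥ 2. If q_0 = p_0, q_1 = (n/m) ω_1 p_1 + (1 − (n/m) ω_1) p_0, and q_2 = (1/(m(m−1))) { n(n−1) ω_2 p_2 + 2 n ω_1 (m − n ω_1) p_1 + [m(m−1) + 2 n ω_1 (n ω_1 − m) + n ω_2 (1 − n)] p_0 }, then Q(0) = P(0), Q′(0) = P′(0), and Q″(0) = P″(0). -/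

import Mathlib

/-- The Bernstein polynomial `B_i^n(t) = C(n,i) t^i (1-t)^(n-i)`. -/
noncomputable def bern (n i : ℕ) (t : ℝ) : ℝ :=
  (n.choose i : ℝ) * t ^ i * (1 - t) ^ (n - i)


noncomputable def dbern (n i : ℕ) (t : ℝ) : ℝ :=
  (n.choose i : ℝ) * ((i : ℝ) * t ^ (i - 1) * (1 - t) ^ (n - i)
    - ((n - i : ℕ) : ℝ) * t ^ i * (1 - t) ^ (n - i - 1))

noncomputable def d2bern (n i : ℕ) (t : ℝ) : ℝ :=
  (n.choose i : ℝ) * ((i : ℝ) * ((i - 1 : ℕ) : ℝ) * t ^ (i - 1 - 1) * (1 - t) ^ (n - i)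
    - 2 * (i : ℝ) * ((n - i : ℕ) : ℝ) * t ^ (i - 1) * (1 - t) ^ (n - i - 1)
    + ((n - i : ℕ) : ℝ) * ((n - i - 1 : ℕ) : ℝ) * t ^ i * (1 - t) ^ (n - i - 1 - 1))

lemma hasDerivAt_one_sub_pow (k : ℕ) (t : ℝ) :
    HasDerivAt (fun s : ℝ => (1 - s) ^ k) (-((k : ℝ) * (1 - t) ^ (k - 1))) t := by
  have h : HasDerivAt (fun s : ℝ => 1 - s) (-1) t := (hasDerivAt_id t).const_sub 1
  simpa [Function.comp_def] using (hasDerivAt_pow k (1 - t)).comp t h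

lemma hasDerivAt_bern (n i : ℕ) (t : ℝ) : HasDerivAt (bern n i) (dbern n i t) t := by
  unfold bern dbern
  have h1 : HasDerivAt (fun s : ℝ => (n.choose i : ℝ) * s ^ i)
      ((n.choose i : ℝ) * ((i : ℝ) * t ^ (i - 1))) t :=
    (hasDerivAt_pow i t).const_mul _
  have h := h1.fun_mul (hasDerivAt_one_sub_pow (n - i) t)
  exact h.congr_deriv (by ring)

lemma hasDerivAt_dbern (n i : ℕ) (t : ℝ) : HasDerivAt (dbern n i) (d2bern n i t) t := by
  unfold dbern d2bern
  have hA : HasDerivAt (fun s : ℝ => (i : ℝ) * s ^ (i - 1))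
      ((i : ℝ) * (((i - 1 : ℕ) : ℝ) * t ^ (i - 1 - 1))) t :=
    (hasDerivAt_pow (i - 1) t).const_mul _
  have hB := hasDerivAt_one_sub_pow (n - i) t
  have hC : HasDerivAt (fun s : ℝ => ((n - i : ℕ) : ℝ) * s ^ i)
      (((n - i : ℕ) : ℝ) * ((i : ℝ) * t ^ (i - 1))) t :=
    (hasDerivAt_pow i t).const_mul _
  have hD := hasDerivAt_one_sub_pow (n - i - 1) t
  have h := (((hA.fun_mul hB).fun_sub (hC.fun_mul hD)).const_mul ((n.choose i : ℝ)))
  exact h.congr_deriv (by ring)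

lemma bern_zero (n i : ℕ) : bern n i 0 = if i = 0 then 1 else 0 := by
  rcases i with _ | k <;> simp [bern]

lemma dbern_zero (n i : ℕ) :
    dbern n i 0 = if i = 0 then -(n : ℝ) else if i = 1 then (n : ℝ) else 0 := by
  match i with
  | 0 => simp [dbern]
  | 1 => simp [dbern, Nat.choose_one_right]
  | (k+2) => simp [dbern]

lemma d2bern_zero (n i : ℕ) (hn : 2 ≤ n) :
    d2bern n i 0 = if i = 0 then (n : ℝ) * ((n : ℝ) - 1)
      else if i = 1 then -2 * (n : ℝ) * ((n : ℝ) - 1)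
      else if i = 2 then (n : ℝ) * ((n : ℝ) - 1) else 0 := by
  have h1 : ((n - 1 : ℕ) : ℝ) = (n : ℝ) - 1 := by
    push_cast [Nat.cast_sub (show 1 ≤ n by omega)]; ring
  have h2 : ((n - 2 : ℕ) : ℝ) = (n : ℝ) - 2 := by
    push_cast [Nat.cast_sub hn]; ring
  match i with
  | 0 => simp [d2bern, h1]
  | 1 =>
    simp only [d2bern, Nat.choose_one_right]
    norm_num [h1]
    ring
  | 2 =>
    simp only [d2bern]
    norm_num [Nat.cast_choose_two]
  | (k+3) => simp [d2bern]

lemma sum_split3 {M : Type*} [AddCommMonoid M] (n : ℕ) (hn : 2 ≤ n) (g : ℕ → M)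
    (hg : ∀ i, 3 ≤ i → g i = 0) :
    ∑ i ∈ Finset.range (n + 1), g i = g 0 + g 1 + g 2 := by
  rw [← Finset.sum_subset (show Finset.range 3 ⊆ Finset.range (n + 1) by
        exact Finset.range_subset_range.mpr (by omega))
      (fun x _ hx => hg x (by simp [Finset.mem_range] at hx; omega))]
  rw [Finset.sum_range_succ, Finset.sum_range_succ, Finset.sum_range_one]

theorem constrained_contact_at_zero (n : ℕ) (hn : 2 ≤ n) (d : ℕ)
    (p : ℕ → EuclideanSpace ℝ (Fin d)) (ω : ℕ → ℝ)
    (hω : ∀ i ≤ n, 0 < ω i) (hω0 : ω 0 = 1) (hωn : ω n = 1)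
    (P : ℝ → EuclideanSpace ℝ (Fin d))
    (hP : ∀ t, P t = (∑ i ∈ Finset.range (n + 1), ω i * bern n i t)⁻¹ •
        ∑ i ∈ Finset.range (n + 1), (ω i * bern n i t) • p i)
    (m : ℕ) (hm : 2 ≤ m)
    (q : ℕ → EuclideanSpace ℝ (Fin d))
    (Q : ℝ → EuclideanSpace ℝ (Fin d))
    (hQ : ∀ t, Q t = ∑ i ∈ Finset.range (m + 1), bern m i t • q i)
    (hq0 : q 0 = p 0)
    (hq1 : q 1 = ((n : ℝ) / m * ω 1) • p 1 + (1 - (n : ℝ) / m * ω 1) • p 0)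
    (hq2 : q 2 = (1 / ((m : ℝ) * ((m : ℝ) - 1))) •
        (((n : ℝ) * ((n : ℝ) - 1) * ω 2) • p 2 +
          (2 * (n : ℝ) * ω 1 * ((m : ℝ) - (n : ℝ) * ω 1)) • p 1 +
          ((m : ℝ) * ((m : ℝ) - 1) + 2 * (n : ℝ) * ω 1 * ((n : ℝ) * ω 1 - (m : ℝ)) +
            (n : ℝ) * ω 2 * (1 - (n : ℝ))) • p 0)) :
    Q 0 = P 0 ∧ deriv Q 0 = deriv P 0 ∧ deriv (deriv Q) 0 = deriv (deriv P) 0 := by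
  have hm0 : (m : ℝ) ≠ 0 := by
    have : (2 : ℝ) ≤ m := by exact_mod_cast hm
    linarith
  have hm1 : (m : ℝ) - 1 ≠ 0 := by
    have : (2 : ℝ) ≤ m := by exact_mod_cast hm
    linarith
  -- Q side
  have hQfun : Q = fun t => ∑ i ∈ Finset.range (m + 1), bern m i t • q i := funext hQ
  have hQd : ∀ t, HasDerivAt Q (∑ i ∈ Finset.range (m + 1), dbern m i t • q i) t := by
    intro t
    rw [hQfun]
    exact HasDerivAt.fun_sum fun i _ => (hasDerivAt_bern m i t).smul_const (q i)
  have hdQ : deriv Q = fun t => ∑ i ∈ Finset.range (m + 1), dbern m i t • q i :=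
    funext fun t => (hQd t).deriv
  have hQd2 : HasDerivAt (deriv Q) (∑ i ∈ Finset.range (m + 1), d2bern m i 0 • q i) 0 := by
    rw [hdQ]
    exact HasDerivAt.fun_sum fun i _ => (hasDerivAt_dbern m i 0).smul_const (q i)
  have hQ0 : Q 0 = q 0 := by
    rw [hQ 0, sum_split3 m hm _ (fun i hi => by
      simp [bern_zero, show ¬ i = 0 by omega])]
    simp [bern_zero]
  have hQ1 : deriv Q 0 = (-(m : ℝ)) • q 0 + (m : ℝ) • q 1 := by
    rw [(hQd 0).deriv]
    rw [sum_split3 m hm _ (fun i hi => by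
      simp [dbern_zero, show ¬ i = 0 by omega, show ¬ i = 1 by omega])]
    simp [dbern_zero]
  have hQ2 : deriv (deriv Q) 0 = ((m : ℝ) * ((m : ℝ) - 1)) • q 0
      + (-2 * (m : ℝ) * ((m : ℝ) - 1)) • q 1 + ((m : ℝ) * ((m : ℝ) - 1)) • q 2 := by
    rw [hQd2.deriv]
    rw [sum_split3 m hm _ (fun i hi => by
      simp [d2bern_zero m i hm, show ¬ i = 0 by omega, show ¬ i = 1 by omega,
        show ¬ i = 2 by omega])]
    simp [d2bern_zero m _ hm]
  -- P side
  set Nf : ℝ → ℝ := fun t => ∑ i ∈ Finset.range (n + 1), ω i * bern n i t with hNf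
  set Vf : ℝ → EuclideanSpace ℝ (Fin d) :=
    fun t => ∑ i ∈ Finset.range (n + 1), (ω i * bern n i t) • p i with hVf
  set N1 : ℝ → ℝ := fun t => ∑ i ∈ Finset.range (n + 1), ω i * dbern n i t with hN1f
  set N2 : ℝ → ℝ := fun t => ∑ i ∈ Finset.range (n + 1), ω i * d2bern n i t with hN2f
  set V1 : ℝ → EuclideanSpace ℝ (Fin d) :=
    fun t => ∑ i ∈ Finset.range (n + 1), (ω i * dbern n i t) • p i with hV1f
  set V2 : ℝ → EuclideanSpace ℝ (Fin d) :=
    fun t => ∑ i ∈ Finset.range (n + 1), (ω i * d2bern n i t) • p i with hV2f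
  have hPe : ∀ t, P t = (Nf t)⁻¹ • Vf t := by
    intro t
    simp only [hNf, hVf]
    exact hP t
  have hNd : ∀ t, HasDerivAt Nf (N1 t) t := fun t =>
    HasDerivAt.fun_sum fun i _ => (hasDerivAt_bern n i t).const_mul (ω i)
  have hN1d : ∀ t, HasDerivAt N1 (N2 t) t := fun t =>
    HasDerivAt.fun_sum fun i _ => (hasDerivAt_dbern n i t).const_mul (ω i)
  have hVd : ∀ t, HasDerivAt Vf (V1 t) t := fun t =>
    HasDerivAt.fun_sum fun i _ => ((hasDerivAt_bern n i t).const_mul (ω i)).smul_const (p i)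
  have hV1d : ∀ t, HasDerivAt V1 (V2 t) t := fun t =>
    HasDerivAt.fun_sum fun i _ => ((hasDerivAt_dbern n i t).const_mul (ω i)).smul_const (p i)
  have key0 : Nf 0 = 1 := by
    simp only [hNf]
    rw [sum_split3 n hn _ (fun i hi => by simp [bern_zero, show ¬ i = 0 by omega])]
    simp [bern_zero, hω0]
  have keyN1 : N1 0 = (n : ℝ) * ω 1 - n := by
    simp only [hN1f]
    rw [sum_split3 n hn _ (fun i hi => by
      simp [dbern_zero, show ¬ i = 0 by omega, show ¬ i = 1 by omega])]
    simp [dbern_zero, hω0]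
    ring
  have keyN2 : N2 0 = (n : ℝ) * ((n : ℝ) - 1) * (1 - 2 * ω 1 + ω 2) := by
    simp only [hN2f]
    rw [sum_split3 n hn _ (fun i hi => by
      simp [d2bern_zero n i hn, show ¬ i = 0 by omega, show ¬ i = 1 by omega,
        show ¬ i = 2 by omega])]
    simp [d2bern_zero n _ hn, hω0]
    ring
  have keyV0 : Vf 0 = p 0 := by
    simp only [hVf]
    rw [sum_split3 n hn _ (fun i hi => by simp [bern_zero, show ¬ i = 0 by omega])]
    simp [bern_zero, hω0]
  have keyV1 : V1 0 = (-(n : ℝ)) • p 0 + ((n : ℝ) * ω 1) • p 1 := by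
    simp only [hV1f]
    rw [sum_split3 n hn _ (fun i hi => by
      simp [dbern_zero, show ¬ i = 0 by omega, show ¬ i = 1 by omega])]
    simp [dbern_zero, hω0]
    match_scalars <;> ring
  have keyV2 : V2 0 = ((n : ℝ) * ((n : ℝ) - 1)) • p 0
      + (-2 * (n : ℝ) * ((n : ℝ) - 1) * ω 1) • p 1
      + ((n : ℝ) * ((n : ℝ) - 1) * ω 2) • p 2 := by
    simp only [hV2f]
    rw [sum_split3 n hn _ (fun i hi => by
      simp [d2bern_zero n i hn, show ¬ i = 0 by omega, show ¬ i = 1 by omega,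
        show ¬ i = 2 by omega])]
    simp [d2bern_zero n _ hn, hω0]
    match_scalars <;> ring
  have hne : Nf 0 ≠ 0 := by rw [key0]; norm_num
  have hev : ∀ᶠ t in nhds (0 : ℝ), Nf t ≠ 0 := (hNd 0).continuousAt.eventually_ne hne
  have hPg : ∀ t, Nf t ≠ 0 →
      HasDerivAt P ((Nf t)⁻¹ • V1 t + (-(N1 t) / Nf t ^ 2) • Vf t) t := by
    intro t ht
    have hPfun : P = fun y => (Nf y)⁻¹ • Vf y := funext hPe
    rw [hPfun]
    exact ((hNd t).inv ht).smul (hVd t)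
  have hP1 : deriv P 0 = (Nf 0)⁻¹ • V1 0 + (-(N1 0) / Nf 0 ^ 2) • Vf 0 := (hPg 0 hne).deriv
  have hdPev : deriv P =ᶠ[nhds (0 : ℝ)]
      fun t => (Nf t)⁻¹ • V1 t + (-(N1 t) / Nf t ^ 2) • Vf t :=
    hev.mono fun t ht => (hPg t ht).deriv
  have hg1 : HasDerivAt (fun t => (Nf t)⁻¹ • V1 t)
      ((Nf 0)⁻¹ • V2 0 + (-(N1 0) / Nf 0 ^ 2) • V1 0) 0 := ((hNd 0).inv hne).smul (hV1d 0)
  have hsc := ((hN1d 0).neg).div (HasDerivAt.pow (n := 2) (hNd 0)) (pow_ne_zero 2 hne : Nf 0 ^ 2 ≠ 0)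
  have hg2 := hsc.smul (hVd 0)
  have hg := hg1.add hg2
  have hP2 := hdPev.deriv_eq.trans hg.deriv
  refine ⟨?_, ?_, ?_⟩
  · rw [hQ0, hq0, hPe 0, key0, keyV0]
    simp
  · rw [hQ1, hP1, key0, keyN1, keyV0, keyV1, hq0, hq1]
    match_scalars <;> field_simp <;> ring
  · simp only [Pi.div_apply, Pi.neg_apply, Pi.pow_apply] at hP2
    rw [hQ2, hP2, key0, keyN1, keyN2, keyV0, keyV1, keyV2, hq0, hq1, hq2]
    match_scalars <;> field_simp <;> ring
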